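/- Second moment of a Hermite polynomial of a shifted Gaussian: For every natural number d, every θ ∈ ℝ, and X distributed as the one-dimensional Gaussian N(θ, 1), one has E[He_d(X)²] = Σ_{k=0}^{d} C(d, k)² · θ^{2(d−k)} · k!, where C(d, k) denotes the binomial coefficient. -/

import Mathlib

open MeasureTheory

open Polynomial Real
open scoped NNReal ENNReal

noncomputable section

noncomputable def Hp (n : ℕ) : ℝ[X] := (hermite n).map (Int.castRingHom ℝ)

lemma Hp_eval (n : ℕ) (x : ℝ) : (Hp n).eval x = aeval x (hermite n) := by
  rw [Hp, aeval_def, eval₂_eq_eval_map, algebraMap_int_eq]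

lemma Hp_zero : Hp 0 = 1 := by simp [Hp]

lemma Hp_succ (n : ℕ) : Hp (n + 1) = X * Hp n - derivative (Hp n) := by
  rw [Hp, hermite_succ, Polynomial.map_sub, Polynomial.map_mul, map_X, ← derivative_map]
  rfl

lemma derivative_Hp (n : ℕ) : derivative (Hp (n + 1)) = C ((n : ℝ) + 1) * Hp n := by
  induction n with
  | zero => simp [Hp, hermite_one, hermite_zero]
  | succ n ih =>
    have h1 : derivative (Hp (n + 1 + 1)) =
        Hp (n + 1) + X * derivative (Hp (n + 1)) - derivative (derivative (Hp (n + 1))) := by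
      rw [Hp_succ (n + 1), derivative_sub, derivative_mul, derivative_X, one_mul]
    have hc : ((n + 1 : ℕ) : ℝ) + 1 = ((n : ℝ) + 1) + 1 := by push_cast; ring
    calc derivative (Hp (n + 1 + 1))
        = Hp (n + 1) + X * (C ((n : ℝ) + 1) * Hp n) - C ((n : ℝ) + 1) * derivative (Hp n) := by
          rw [h1, ih, derivative_C_mul]
      _ = Hp (n + 1) + C ((n : ℝ) + 1) * (X * Hp n - derivative (Hp n)) := by ring
      _ = Hp (n + 1) + C ((n : ℝ) + 1) * Hp (n + 1) := by rw [← Hp_succ]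
      _ = C (((n + 1 : ℕ) : ℝ) + 1) * Hp (n + 1) := by simp only [hc, C_add, C_1]; ring

lemma iterate_derivative_Hp_self (n : ℕ) :
    derivative^[n] (Hp n) = C (n.factorial : ℝ) := by
  induction n with
  | zero => simp [Hp_zero]
  | succ n ih =>
    rw [Function.iterate_succ_apply, derivative_Hp, iterate_derivative_C_mul, ih,
      ← C_mul, Nat.factorial_succ]
    push_cast
    ring_nf

lemma iterate_derivative_Hp_of_lt {j k : ℕ} (h : j < k) :
    derivative^[k] (Hp j) = 0 := by
  apply iterate_derivative_eq_zero
  rw [Hp]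
  refine lt_of_le_of_lt natDegree_map_le ?_
  simpa [natDegree_hermite] using h

lemma Hp_comp (θ : ℝ) (d : ℕ) : (Hp d).comp (X + C θ) =
    ∑ k ∈ Finset.range (d + 1), C ((d.choose k : ℝ) * θ ^ (d - k)) * Hp k := by
  induction d with
  | zero => simp [Hp_zero]
  | succ d ih =>
    have h1 : (Hp (d + 1)).comp (X + C θ)
        = (X + C θ) * (Hp d).comp (X + C θ) - derivative ((Hp d).comp (X + C θ)) := by
      rw [Hp_succ, sub_comp, mul_comp, X_comp, derivative_comp]
      simp
    rw [h1, ih]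
    have expand : (X + C θ) * (∑ k ∈ Finset.range (d + 1),
          C ((d.choose k : ℝ) * θ ^ (d - k)) * Hp k)
        - derivative (∑ k ∈ Finset.range (d + 1), C ((d.choose k : ℝ) * θ ^ (d - k)) * Hp k)
        = ∑ k ∈ Finset.range (d + 1),
            (C ((d.choose k : ℝ) * θ ^ (d - k)) * Hp (k + 1)
              + C (θ * ((d.choose k : ℝ) * θ ^ (d - k))) * Hp k) := by
      rw [map_sum, Finset.mul_sum, ← Finset.sum_sub_distrib]
      refine Finset.sum_congr rfl fun k _ => ?_
      rw [derivative_C_mul, Hp_succ]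
      simp only [C_mul]
      ring
    rw [expand, Finset.sum_add_distrib]
    rw [Finset.sum_range_succ'
      (fun k => C (((d + 1).choose k : ℝ) * θ ^ (d + 1 - k)) * Hp k) (d + 1)]
    have hkey : ∀ i ∈ Finset.range (d + 1),
        C (((d + 1).choose (i + 1) : ℝ) * θ ^ (d + 1 - (i + 1))) * Hp (i + 1)
          = C ((d.choose i : ℝ) * θ ^ (d - i)) * Hp (i + 1)
            + C (θ * ((d.choose (i + 1) : ℝ) * θ ^ (d - (i + 1)))) * Hp (i + 1) := by
      intro i hi
      rw [Finset.mem_range, Nat.lt_succ_iff] at hi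
      have hd : d + 1 - (i + 1) = d - i := by omega
      rw [hd, Nat.choose_succ_succ]
      rcases eq_or_lt_of_le hi with h | h
      · subst h
        simp [Nat.choose_succ_self, Nat.sub_self]
      · have h2 : d - i = (d - (i + 1)) + 1 := by omega
        rw [h2, pow_succ]
        push_cast
        rw [show ((d.choose i : ℝ) + (d.choose (i + 1) : ℝ)) * (θ ^ (d - (i + 1)) * θ)
            = (d.choose i : ℝ) * (θ ^ (d - (i + 1)) * θ)
              + θ * ((d.choose (i + 1) : ℝ) * θ ^ (d - (i + 1))) from by ring, C_add, add_mul]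
    rw [Finset.sum_congr rfl hkey, Finset.sum_add_distrib]
    have h2 : ∑ k ∈ Finset.range (d + 1 + 1), C (θ * ((d.choose k : ℝ) * θ ^ (d - k))) * Hp k
        = ∑ k ∈ Finset.range (d + 1), C (θ * ((d.choose k : ℝ) * θ ^ (d - k))) * Hp k := by
      rw [Finset.sum_range_succ]
      simp [Nat.choose_succ_self]
    have h3 : ∑ k ∈ Finset.range (d + 1 + 1), C (θ * ((d.choose k : ℝ) * θ ^ (d - k))) * Hp k
        = (∑ i ∈ Finset.range (d + 1),
            C (θ * ((d.choose (i + 1) : ℝ) * θ ^ (d - (i + 1)))) * Hp (i + 1))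
          + C (((d + 1).choose 0 : ℝ) * θ ^ (d + 1 - 0)) * Hp 0 := by
      rw [Finset.sum_range_succ'
        (fun k => C (θ * ((d.choose k : ℝ) * θ ^ (d - k))) * Hp k) (d + 1)]
      congr 2
      simp [pow_succ]
      ring
    rw [← h2, h3]
    ring

lemma hermite_shift (d : ℕ) (θ x : ℝ) :
    (aeval (x + θ) (hermite d) : ℝ)
      = ∑ k ∈ Finset.range (d + 1), (d.choose k : ℝ) * θ ^ (d - k) * aeval x (hermite k) := by
  have := congrArg (eval x) (Hp_comp θ d)
  rw [eval_comp] at this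
  simp only [eval_add, eval_X, eval_C, Hp_eval] at this
  rw [this]
  simp only [eval_finset_sum, eval_mul, eval_C, Hp_eval]

lemma integrable_pow_gauss (n : ℕ) :
    Integrable (fun x : ℝ => x ^ n * rexp (-(x ^ 2 / 2))) := by
  have h := integrable_rpow_mul_exp_neg_mul_sq (b := 1/2) (by norm_num) (s := (n : ℝ))
    (lt_of_lt_of_le neg_one_lt_zero (Nat.cast_nonneg n))
  have he : ∀ x : ℝ, rexp (-(1/2 : ℝ) * x ^ 2) = rexp (-(x ^ 2 / 2)) := by
    intro x; ring_nf
  simpa only [Real.rpow_natCast, he] using h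

lemma integrable_poly_gauss (p : ℝ[X]) :
    Integrable (fun x : ℝ => p.eval x * rexp (-(x ^ 2 / 2))) := by
  induction p using Polynomial.induction_on' with
  | add p q hp hq =>
    have := hp.add hq
    simp only [eval_add, add_mul]
    exact this
  | monomial n a =>
    have := (integrable_pow_gauss n).const_mul a
    simpa [eval_monomial, mul_assoc] using this

lemma parts_step (p : ℝ[X]) (n : ℕ) :
    ∫ x : ℝ, p.eval x * ((Hp (n + 1)).eval x * rexp (-(x ^ 2 / 2)))
      = ∫ x : ℝ, (derivative p).eval x * ((Hp n).eval x * rexp (-(x ^ 2 / 2))) := by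
  have hg : ∀ x : ℝ, HasDerivAt (fun y : ℝ => rexp (-(y ^ 2 / 2))) (-x * rexp (-(x ^ 2 / 2))) x := by
    intro x
    have h1 : HasDerivAt (fun y : ℝ => -(y ^ 2 / 2)) (-x) x := by
      have := ((hasDerivAt_pow 2 x).div_const 2).neg
      exact this.congr_deriv (by simp)
    have := h1.exp
    simpa [mul_comm] using this
  have hv : ∀ x : ℝ, HasDerivAt (fun y : ℝ => (Hp n).eval y * rexp (-(y ^ 2 / 2)))
      (-((Hp (n + 1)).eval x * rexp (-(x ^ 2 / 2)))) x := by
    intro x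
    have h := ((Hp n).hasDerivAt x).mul (hg x)
    refine h.congr_deriv ?_
    rw [Hp_succ]
    simp only [eval_sub, eval_mul, eval_X]
    ring
  have hu : ∀ x : ℝ, HasDerivAt (fun y : ℝ => p.eval y) ((derivative p).eval x) x :=
    fun x => p.hasDerivAt x
  have huv' : Integrable ((fun y : ℝ => p.eval y) *
      fun x : ℝ => -((Hp (n + 1)).eval x * rexp (-(x ^ 2 / 2)))) := by
    have h := (integrable_poly_gauss (p * Hp (n + 1))).neg
    have he : ((fun y : ℝ => p.eval y) *
        fun x : ℝ => -((Hp (n + 1)).eval x * rexp (-(x ^ 2 / 2))))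
        = fun x : ℝ => -((p * Hp (n + 1)).eval x * rexp (-(x ^ 2 / 2))) := by
      funext x; simp only [Pi.mul_apply, eval_mul]; ring
    rw [he]; exact h
  have hu'v : Integrable ((fun x : ℝ => (derivative p).eval x) *
      fun x : ℝ => (Hp n).eval x * rexp (-(x ^ 2 / 2))) := by
    have h := integrable_poly_gauss (derivative p * Hp n)
    have he : ((fun x : ℝ => (derivative p).eval x) *
        fun x : ℝ => (Hp n).eval x * rexp (-(x ^ 2 / 2)))
        = fun x : ℝ => (derivative p * Hp n).eval x * rexp (-(x ^ 2 / 2)) := by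
      funext x; simp only [Pi.mul_apply, eval_mul]; ring
    rw [he]; exact h
  have huv : Integrable ((fun y : ℝ => p.eval y) *
      fun x : ℝ => (Hp n).eval x * rexp (-(x ^ 2 / 2))) := by
    have h := integrable_poly_gauss (p * Hp n)
    have he : ((fun y : ℝ => p.eval y) *
        fun x : ℝ => (Hp n).eval x * rexp (-(x ^ 2 / 2)))
        = fun x : ℝ => (p * Hp n).eval x * rexp (-(x ^ 2 / 2)) := by
      funext x; simp only [Pi.mul_apply, eval_mul]; ring
    rw [he]; exact h
  have key := MeasureTheory.integral_mul_deriv_eq_deriv_mul_of_integrable (fun x _ => hu x) (fun x _ => hv x) huv' hu'v huv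
  simp only [mul_neg] at key
  rw [integral_neg] at key
  exact neg_inj.mp key

lemma reduce (n : ℕ) : ∀ p : ℝ[X],
    ∫ x : ℝ, p.eval x * ((Hp n).eval x * rexp (-(x ^ 2 / 2)))
      = ∫ x : ℝ, (derivative^[n] p).eval x * rexp (-(x ^ 2 / 2)) := by
  induction n with
  | zero => intro p; simp [Hp_zero]
  | succ n ih =>
    intro p
    rw [parts_step p n, ih (derivative p), ← Function.iterate_succ_apply]

lemma orth_le {j k : ℕ} (h : j ≤ k) :
    ∫ x : ℝ, (Hp j).eval x * ((Hp k).eval x * rexp (-(x ^ 2 / 2)))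
      = (if j = k then (j.factorial : ℝ) else 0) * Real.sqrt (2 * π) := by
  rw [reduce k (Hp j)]
  have hint : ∫ x : ℝ, rexp (-(x ^ 2 / 2)) = Real.sqrt (2 * π) := by
    have h := integral_gaussian (1/2)
    have he : ∀ x : ℝ, rexp (-(1/2 : ℝ) * x ^ 2) = rexp (-(x ^ 2 / 2)) := by
      intro x; ring_nf
    simp only [he] at h
    rw [h]
    norm_num [mul_comm]
  rcases eq_or_lt_of_le h with rfl | hlt
  · rw [iterate_derivative_Hp_self]
    simp only [eval_C]
    rw [MeasureTheory.integral_const_mul, hint]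
    simp
  · rw [iterate_derivative_Hp_of_lt hlt]
    simp [if_neg (Nat.ne_of_lt hlt), integral_zero]

lemma orth (j k : ℕ) :
    ∫ x : ℝ, (Hp j).eval x * (Hp k).eval x * rexp (-(x ^ 2 / 2))
      = (if j = k then (j.factorial : ℝ) else 0) * Real.sqrt (2 * π) := by
  rcases le_total j k with h | h
  · rw [← orth_le h]
    congr 1; funext x; ring
  · have := orth_le h
    have he : (fun x : ℝ => (Hp k).eval x * ((Hp j).eval x * rexp (-(x ^ 2 / 2))))
        = fun x : ℝ => (Hp j).eval x * (Hp k).eval x * rexp (-(x ^ 2 / 2)) := by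
      funext x; ring
    rw [he] at this
    rw [this]
    congr 1
    rcases eq_or_ne j k with rfl | hne
    · simp
    · simp [hne, Ne.symm hne]

lemma integral_gauss01 (h : ℝ → ℝ) :
    ∫ x, h x ∂(ProbabilityTheory.gaussianReal 0 1)
      = ∫ x, ProbabilityTheory.gaussianPDFReal 0 1 x * h x := by
  rw [ProbabilityTheory.gaussianReal_of_var_ne_zero 0 one_ne_zero]
  have hd : ProbabilityTheory.gaussianPDF 0 1
      = fun x => ((Real.toNNReal (ProbabilityTheory.gaussianPDFReal 0 1 x) : ℝ≥0) : ℝ≥0∞) := rfl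
  rw [hd, integral_withDensity_eq_integral_smul
    ((ProbabilityTheory.measurable_gaussianPDFReal 0 1).real_toNNReal) h]
  congr 1
  funext x
  rw [NNReal.smul_def, Real.coe_toNNReal _ (ProbabilityTheory.gaussianPDFReal_nonneg _ _ _), smul_eq_mul]

lemma pdf01 (x : ℝ) : ProbabilityTheory.gaussianPDFReal 0 1 x
    = (Real.sqrt (2 * π))⁻¹ * rexp (-(x ^ 2 / 2)) := by
  simp [ProbabilityTheory.gaussianPDFReal, neg_div]

lemma key_int (j k : ℕ) :
    ∫ x : ℝ, ProbabilityTheory.gaussianPDFReal 0 1 x * ((Hp j).eval x * (Hp k).eval x)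
      = if j = k then (j.factorial : ℝ) else 0 := by
  have he : (fun x : ℝ =>
        ProbabilityTheory.gaussianPDFReal 0 1 x * ((Hp j).eval x * (Hp k).eval x))
      = fun x : ℝ => (Real.sqrt (2 * π))⁻¹
          * ((Hp j).eval x * (Hp k).eval x * rexp (-(x ^ 2 / 2))) := by
    funext x; rw [pdf01]; ring
  rw [he, MeasureTheory.integral_const_mul, orth j k]
  have hs : Real.sqrt (2 * π) ≠ 0 := ne_of_gt (Real.sqrt_pos.mpr (by positivity))
  field_simp

lemma int_term (j k : ℕ) :
    Integrable (fun x : ℝ =>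
      ProbabilityTheory.gaussianPDFReal 0 1 x * ((Hp j).eval x * (Hp k).eval x)) := by
  have he : (fun x : ℝ =>
        ProbabilityTheory.gaussianPDFReal 0 1 x * ((Hp j).eval x * (Hp k).eval x))
      = fun x : ℝ => (Real.sqrt (2 * π))⁻¹
          * ((Hp j * Hp k).eval x * rexp (-(x ^ 2 / 2))) := by
    funext x; rw [pdf01, eval_mul]; ring
  rw [he]
  exact (integrable_poly_gauss (Hp j * Hp k)).const_mul _

end

/-- Second moment of a Hermite polynomial of a shifted Gaussian: for `X ~ N(θ,1)`,
`E[He_d(X)²] = ∑_{k=0}^{d} C(d,k)² θ^{2(d-k)} k!`. -/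
theorem stmt_6 (d : ℕ) (θ : ℝ) :
    (∫ x, (Polynomial.aeval x (Polynomial.hermite d) : ℝ) ^ 2
        ∂(ProbabilityTheory.gaussianReal θ 1)) =
      ∑ k ∈ Finset.range (d + 1),
        (d.choose k : ℝ) ^ 2 * θ ^ (2 * (d - k)) * (k.factorial : ℝ) := by
  have hmap : ProbabilityTheory.gaussianReal θ 1
      = (ProbabilityTheory.gaussianReal 0 1).map (· + θ) := by
    have := ProbabilityTheory.gaussianReal_map_add_const (μ := 0) (v := 1) θ
    rw [zero_add] at this
    exact this.symm
  have hcont : Continuous fun x : ℝ => (aeval x (hermite d) : ℝ) ^ 2 :=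
    (Polynomial.continuous_aeval _).pow 2
  rw [hmap, MeasureTheory.integral_map (measurable_id'.add_const θ).aemeasurable
    hcont.aestronglyMeasurable]
  rw [integral_gauss01]
  have hpt : ∀ x : ℝ,
      ProbabilityTheory.gaussianPDFReal 0 1 x * (aeval (x + θ) (hermite d) : ℝ) ^ 2
        = ∑ j ∈ Finset.range (d + 1), ∑ k ∈ Finset.range (d + 1),
            ((d.choose j : ℝ) * θ ^ (d - j) * ((d.choose k : ℝ) * θ ^ (d - k)))
              * (ProbabilityTheory.gaussianPDFReal 0 1 x * ((Hp j).eval x * (Hp k).eval x)) := by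
    intro x
    rw [hermite_shift, sq, Finset.sum_mul_sum, Finset.mul_sum]
    refine Finset.sum_congr rfl fun j _ => ?_
    rw [Finset.mul_sum]
    refine Finset.sum_congr rfl fun k _ => ?_
    simp only [← Hp_eval]
    ring
  simp only [hpt]
  rw [MeasureTheory.integral_finset_sum _ (fun j _ =>
    MeasureTheory.integrable_finset_sum _ (fun k _ => (int_term j k).const_mul _))]
  refine Finset.sum_congr rfl fun j hj => ?_
  rw [MeasureTheory.integral_finset_sum _ (fun k _ => (int_term j k).const_mul _)]
  have hterm : ∀ k ∈ Finset.range (d + 1),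
      (∫ x : ℝ, ((d.choose j : ℝ) * θ ^ (d - j) * ((d.choose k : ℝ) * θ ^ (d - k)))
          * (ProbabilityTheory.gaussianPDFReal 0 1 x * ((Hp j).eval x * (Hp k).eval x)))
        = if j = k then ((d.choose j : ℝ) * θ ^ (d - j) * ((d.choose k : ℝ) * θ ^ (d - k)))
            * (j.factorial : ℝ) else 0 := by
    intro k _
    rw [MeasureTheory.integral_const_mul, key_int j k]
    split <;> simp
  rw [Finset.sum_congr rfl hterm, Finset.sum_ite_eq (Finset.range (d + 1)) j
    (fun k => ((d.choose j : ℝ) * θ ^ (d - j) * ((d.choose k : ℝ) * θ ^ (d - k)))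
      * (j.factorial : ℝ)), if_pos hj]
  rw [two_mul, pow_add]
  ring
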